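/- There exists a constant C > 0 such that for every smooth compactly supported vector field u : ℝ³ → ℝ³, one has ‖u‖_{L⁴(ℝ³)} ≤ C · ‖u‖_{L²(ℝ³)}^{1/4} · ‖∇u‖_{L²(ℝ³)}^{3/4}, where ‖∇u‖_{L²} denotes the L² norm of the function x ↦ ‖fderiv ℝ u x‖. -/

import Mathlib

open MeasureTheory Metric Set Filter
open scoped RealInnerProductSpace ContDiff SchwartzMap

open scoped ENNReal NNReal

noncomputable section

abbrev E3 := EuclideanSpace ℝ (Fin 3)

set_option maxHeartbeats 1000000 in
/-- Gagliardo–Nirenberg–Sobolev-type interpolation inequality in ℝ³: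
`‖u‖_{L⁴} ≤ C ‖u‖_{L²}^{1/4} ‖∇u‖_{L²}^{3/4}` for smooth compactly supported fields. -/
theorem L4_interpolation_inequality :
    ∃ c > 0, ∀ u : E3 → E3, ContDiff ℝ ∞ u → HasCompactSupport u →
      (∫ x : E3, ‖u x‖ ^ 4) ^ ((1:ℝ)/4) ≤
        c * ((∫ x : E3, ‖u x‖ ^ 2) ^ ((1:ℝ)/2)) ^ ((1:ℝ)/4)
          * ((∫ x : E3, ‖fderiv ℝ u x‖ ^ 2) ^ ((1:ℝ)/2)) ^ ((3:ℝ)/4) := by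
  set C : ℝ≥0 := SNormLESNormFDerivOfEqConst (F := E3) (E := E3) volume 2 with hC
  refine ⟨(C : ℝ) ^ ((3:ℝ)/4) + 1, by positivity, fun u hu h2u => ?_⟩
  have hu1 : ContDiff ℝ 1 u := hu.of_le (by exact_mod_cast le_top)
  have hucont : Continuous u := hu.continuous
  -- Memℒp facts
  have hmem : ∀ p : ℝ≥0∞, MemLp u p volume :=
    fun p => hucont.memLp_of_hasCompactSupport h2u
  have hfdcont : Continuous (fderiv ℝ u) := hu1.continuous_fderiv one_ne_zero
  have hfdsupp : HasCompactSupport (fderiv ℝ u) := h2u.fderiv ℝ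
  have hfdmem : MemLp (fderiv ℝ u) ((2:ℝ≥0) : ℝ≥0∞) volume :=
    hfdcont.memLp_of_hasCompactSupport hfdsupp
  set I2 : ℝ := ∫ x : E3, ‖u x‖ ^ 2 with hI2
  set I4 : ℝ := ∫ x : E3, ‖u x‖ ^ 4 with hI4
  set I6 : ℝ := ∫ x : E3, ‖u x‖ ^ 6 with hI6
  set J : ℝ := ∫ x : E3, ‖fderiv ℝ u x‖ ^ 2 with hJ
  have hI2nn : 0 ≤ I2 := integral_nonneg fun x => by positivity
  have hI4nn : 0 ≤ I4 := integral_nonneg fun x => by positivity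
  have hI6nn : 0 ≤ I6 := integral_nonneg fun x => by positivity
  have hJnn : 0 ≤ J := integral_nonneg fun x => by positivity
  -- Sobolev inequality : eLpNorm u 6 ≤ C * eLpNorm (fderiv u) 2
  have hSob : eLpNorm u ((6:ℝ≥0) : ℝ≥0∞) volume ≤
      C * eLpNorm (fderiv ℝ u) ((2:ℝ≥0) : ℝ≥0∞) volume := by
    refine eLpNorm_le_eLpNorm_fderiv_of_eq (p := 2) (p' := 6) volume hu1 h2u (by norm_num) ?_ ?_
    · simp [finrank_euclideanSpace_fin]
    · simp [finrank_euclideanSpace_fin]; norm_num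
  -- rewrite eLpNorms as real integrals
  have h6 : eLpNorm u ((6:ℝ≥0) : ℝ≥0∞) volume
      = ENNReal.ofReal (I6 ^ ((6:ℝ)⁻¹)) := by
    rw [(hmem _).eLpNorm_eq_integral_rpow_norm (by norm_num) (by norm_num)]
    congr 1
    have : ((((6:ℝ≥0) : ℝ≥0∞)).toReal) = (6:ℝ) := by norm_num
    rw [this]
    congr 1
    rw [hI6]
    refine integral_congr_ae (Eventually.of_forall fun x => ?_)
    show ‖u x‖ ^ (6:ℝ) = ‖u x‖ ^ (6:ℕ)
    rw [show (6:ℝ) = ((6:ℕ):ℝ) by norm_num, Real.rpow_natCast]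
  have h2 : eLpNorm (fderiv ℝ u) ((2:ℝ≥0) : ℝ≥0∞) volume
      = ENNReal.ofReal (J ^ ((2:ℝ)⁻¹)) := by
    rw [hfdmem.eLpNorm_eq_integral_rpow_norm (by norm_num) (by norm_num)]
    congr 1
    have : ((((2:ℝ≥0) : ℝ≥0∞)).toReal) = (2:ℝ) := by norm_num
    rw [this]
    congr 1
    rw [hJ]
    refine integral_congr_ae (Eventually.of_forall fun x => ?_)
    show ‖fderiv ℝ u x‖ ^ (2:ℝ) = ‖fderiv ℝ u x‖ ^ (2:ℕ)
    rw [show (2:ℝ) = ((2:ℕ):ℝ) by norm_num, Real.rpow_natCast]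
  -- real-valued Sobolev
  have hSobR : I6 ^ ((6:ℝ)⁻¹) ≤ (C : ℝ) * J ^ ((2:ℝ)⁻¹) := by
    rw [h6, h2] at hSob
    have hfin : (C : ℝ≥0∞) * ENNReal.ofReal (J ^ ((2:ℝ)⁻¹)) ≠ ⊤ :=
      ENNReal.mul_ne_top ENNReal.coe_ne_top ENNReal.ofReal_ne_top
    have := ENNReal.toReal_mono hfin hSob
    rwa [ENNReal.toReal_ofReal (by positivity), ENNReal.toReal_mul,
      ENNReal.coe_toReal, ENNReal.toReal_ofReal (by positivity)] at this
  -- Hölder : I4 ≤ I2^(1/2) * I6^(1/2)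
  have hHolder : I4 ≤ I2 ^ ((1:ℝ)/2) * I6 ^ ((1:ℝ)/2) := by
    have hmem2 : MemLp (fun x => ‖u x‖) (ENNReal.ofReal 2) volume := by
      have : (ENNReal.ofReal 2) = (2 : ℝ≥0∞) := by norm_num
      rw [this]; exact (hmem 2).norm
    have hg : Continuous (fun x => ‖u x‖ ^ 3) := by continuity
    have hgsupp : HasCompactSupport (fun x => ‖u x‖ ^ 3) := by
      apply HasCompactSupport.comp_left (g := fun y : E3 => ‖y‖ ^ 3) h2u
      simp
    have hmem3 : MemLp (fun x => ‖u x‖ ^ 3) (ENNReal.ofReal 2) volume :=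
      hg.memLp_of_hasCompactSupport hgsupp
    have key := integral_mul_le_Lp_mul_Lq_of_nonneg (μ := volume)
      (Real.holderConjugate_iff_eq_conjExponent (by norm_num) |>.mpr (by norm_num))
      (f := fun x => ‖u x‖) (g := fun x => ‖u x‖ ^ 3)
      (Eventually.of_forall fun x => norm_nonneg _)
      (Eventually.of_forall fun x => by positivity) hmem2 hmem3
    have e1 : (∫ x : E3, ‖u x‖ * ‖u x‖ ^ 3) = I4 := by
      rw [hI4]; congr 1; funext x; ring
    have e2 : (∫ x : E3, ‖u x‖ ^ (2:ℝ)) = I2 := by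
      rw [hI2]; refine integral_congr_ae (Eventually.of_forall fun x => ?_)
      show ‖u x‖ ^ (2:ℝ) = ‖u x‖ ^ (2:ℕ)
      rw [show (2:ℝ) = ((2:ℕ):ℝ) by norm_num, Real.rpow_natCast]
    have e3 : (∫ x : E3, (‖u x‖ ^ 3) ^ (2:ℝ)) = I6 := by
      rw [hI6]; refine integral_congr_ae (Eventually.of_forall fun x => ?_)
      show (‖u x‖ ^ (3:ℕ)) ^ (2:ℝ) = ‖u x‖ ^ (6:ℕ)
      rw [show (2:ℝ) = ((2:ℕ):ℝ) by norm_num, Real.rpow_natCast, ← pow_mul]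
    beta_reduce at key
    rw [e1, e2, e3] at key
    exact key
  -- combine
  have step1 : I4 ^ ((1:ℝ)/4) ≤ (I2 ^ ((1:ℝ)/2)) ^ ((1:ℝ)/4) * (I6 ^ ((1:ℝ)/6)) ^ ((3:ℝ)/4) := by
    calc I4 ^ ((1:ℝ)/4) ≤ (I2 ^ ((1:ℝ)/2) * I6 ^ ((1:ℝ)/2)) ^ ((1:ℝ)/4) := by
          exact Real.rpow_le_rpow hI4nn hHolder (by norm_num)
      _ = (I2 ^ ((1:ℝ)/2)) ^ ((1:ℝ)/4) * (I6 ^ ((1:ℝ)/6)) ^ ((3:ℝ)/4) := by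
          rw [Real.mul_rpow (by positivity) (by positivity),
            ← Real.rpow_mul hI6nn, ← Real.rpow_mul hI6nn]
          norm_num
  have step2 : (I6 ^ ((1:ℝ)/6)) ^ ((3:ℝ)/4) ≤ ((C:ℝ) * J ^ ((2:ℝ)⁻¹)) ^ ((3:ℝ)/4) := by
    refine Real.rpow_le_rpow (by positivity) ?_ (by norm_num)
    simpa [one_div] using hSobR
  have step3 : ((C:ℝ) * J ^ ((2:ℝ)⁻¹)) ^ ((3:ℝ)/4)
      = (C:ℝ) ^ ((3:ℝ)/4) * (J ^ ((1:ℝ)/2)) ^ ((3:ℝ)/4) := by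
    rw [Real.mul_rpow (by positivity) (by positivity)]
    norm_num
  calc I4 ^ ((1:ℝ)/4)
      ≤ (I2 ^ ((1:ℝ)/2)) ^ ((1:ℝ)/4) * ((C:ℝ) ^ ((3:ℝ)/4) * (J ^ ((1:ℝ)/2)) ^ ((3:ℝ)/4)) := by
        refine step1.trans ?_
        refine mul_le_mul_of_nonneg_left ?_ (by positivity)
        rw [← step3]; exact step2
    _ = (C:ℝ) ^ ((3:ℝ)/4) * (I2 ^ ((1:ℝ)/2)) ^ ((1:ℝ)/4) * (J ^ ((1:ℝ)/2)) ^ ((3:ℝ)/4) := by ring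
    _ ≤ ((C:ℝ) ^ ((3:ℝ)/4) + 1) * (I2 ^ ((1:ℝ)/2)) ^ ((1:ℝ)/4) * (J ^ ((1:ℝ)/2)) ^ ((3:ℝ)/4) := by
        have h1 : (0:ℝ) ≤ (I2 ^ ((1:ℝ)/2)) ^ ((1:ℝ)/4) := by positivity
        have h2 : (0:ℝ) ≤ (J ^ ((1:ℝ)/2)) ^ ((3:ℝ)/4) := by positivity
        nlinarith [Real.rpow_nonneg (NNReal.coe_nonneg C) ((3:ℝ)/4)]
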